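/- Let R be a Dedekind domain and H a Hopf algebra over R which is projective as an R-module. For f ∈ H* := Hom_R(H, R) let T_f : H → H be the R-linear map h ↦ ∑ h₁ f(h₂). Then the set Rat(H*) := {f ∈ H* : the image of T_f is a finitely generated R-submodule of H} is an R-submodule of H* which is flat as an R-module and is saturated in H*: if r ∈ R is non-zero and f ∈ H* satisfies r·f ∈ Rat(H*), then f ∈ Rat(H*). -/

import Mathlib

open TensorProduct

section Rat

variable (R H : Type*) [CommRing R] [Ring H] [HopfAlgebra R H]

/-- For `f ∈ H* = Hom_R(H, R)`, the `R`-linear map `T_f : H → H`,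
`h ↦ ∑ h₁ f(h₂)` (Sweedler notation). -/
noncomputable def ratEndo (f : H →ₗ[R] R) : H →ₗ[R] H :=
  (TensorProduct.rid R H).toLinearMap ∘ₗ LinearMap.lTensor H f ∘ₗ
    (Coalgebra.comul : H →ₗ[R] H ⊗[R] H)

end Rat

open FractionalIdeal
open scoped nonZeroDivisors


private theorem aux_exists_sum_eq_one {R : Type*} [CommRing R] [IsDomain R] [IsDedekindDomain R]
    {I : Ideal R} (hI : I ≠ ⊥) :
    ∃ (n : ℕ) (a : Fin n → R) (b : Fin n → FractionRing R),
      (∀ i, a i ∈ I) ∧ (∀ i, b i ∈ (I : FractionalIdeal R⁰ (FractionRing R))⁻¹) ∧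
      (∑ i, algebraMap R (FractionRing R) (a i) * b i) = 1 := by
  set K := FractionRing R
  have h2 : (1 : K) ∈ ((I : FractionalIdeal R⁰ K) : Submodule R K) *
      (((I : FractionalIdeal R⁰ K)⁻¹ : FractionalIdeal R⁰ K) : Submodule R K) := by
    rw [← FractionalIdeal.coe_mul, mul_inv_cancel₀ (coeIdeal_ne_zero.mpr hI)]
    exact FractionalIdeal.mem_coe.mpr ((mem_one_iff _).mpr ⟨1, map_one _⟩)
  refine Submodule.mul_induction_on h2 ?_ ?_
  · rintro m hm y hy
    obtain ⟨a0, ha0, rfl⟩ := (mem_coeIdeal _).mp (FractionalIdeal.mem_coe.mp hm)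
    exact ⟨1, fun _ => a0, fun _ => y, fun _ => ha0,
      fun _ => FractionalIdeal.mem_coe.mp hy, by simp; exact Or.inl rfl⟩
  · rintro x y ⟨n₁, a₁, b₁, ha₁, hb₁, rfl⟩ ⟨n₂, a₂, b₂, ha₂, hb₂, rfl⟩
    refine ⟨n₁ + n₂, Fin.append a₁ a₂, Fin.append b₁ b₂, ?_, ?_, ?_⟩
    · intro i
      refine Fin.addCases (fun j => ?_) (fun j => ?_) i
      · rw [Fin.append_left]; exact ha₁ j
      · rw [Fin.append_right]; exact ha₂ j
    · intro i
      refine Fin.addCases (fun j => ?_) (fun j => ?_) i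
      · rw [Fin.append_left]; exact hb₁ j
      · rw [Fin.append_right]; exact hb₂ j
    · rw [Fin.sum_univ_add]
      simp [Fin.append_left, Fin.append_right]

private theorem aux_ideal_flat {R : Type*} [CommRing R] [IsDomain R] [IsDedekindDomain R]
    (I : Ideal R) : Module.Flat R I := by
  rcases eq_or_ne I ⊥ with rfl | hI
  · haveI : Subsingleton ↥(⊥ : Ideal R) :=
      ⟨fun a b => Subtype.ext (by rw [(Submodule.mem_bot R).mp a.2, (Submodule.mem_bot R).mp b.2])⟩
    infer_instance
  · obtain ⟨n, a, b, haI, hbI, hab⟩ := aux_exists_sum_eq_one hI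
    have halg : Function.Injective (algebraMap R (FractionRing R)) :=
      IsFractionRing.injective R (FractionRing R)
    have hbx : ∀ (i : Fin n) (x : I), ∃ r : R,
        algebraMap R (FractionRing R) r = b i * algebraMap R (FractionRing R) (x : R) := by
      intro i x
      have h := (mem_inv_iff (coeIdeal_ne_zero.mpr hI)).mp (hbI i) _
        (mem_coeIdeal_of_mem R⁰ x.2)
      exact (mem_one_iff _).mp h
    choose φ hφ using hbx
    have hφ_add : ∀ i (x y : I), φ i (x + y) = φ i x + φ i y := by
      intro i x y; apply halg
      rw [_root_.map_add, hφ, hφ, hφ, Submodule.coe_add, _root_.map_add, mul_add]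
    have hφ_smul : ∀ i (c : R) (x : I), φ i (c • x) = c * φ i x := by
      intro i c x; apply halg
      rw [_root_.map_mul, hφ, hφ, Submodule.coe_smul, smul_eq_mul, _root_.map_mul]; ring
    let ψ : I →ₗ[R] (Fin n → R) :=
      { toFun := fun x i => φ i x
        map_add' := fun x y => funext fun i => hφ_add i x y
        map_smul' := fun c x => funext fun i => hφ_smul i c x }
    let π : (Fin n → R) →ₗ[R] I :=
      ∑ i : Fin n, (LinearMap.proj i).smulRight (⟨a i, haI i⟩ : I)
    have hretract : π.comp ψ = LinearMap.id := by
      ext x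
      apply halg
      have hπ : ((π (ψ x) : I) : R) = ∑ i, φ i x * a i := by
        simp [π, ψ, LinearMap.sum_apply, LinearMap.smulRight_apply, AddSubmonoidClass.coe_finset_sum]
      simp only [LinearMap.comp_apply, LinearMap.id_apply]
      rw [hπ, map_sum]
      have : ∀ i, algebraMap R (FractionRing R) (φ i x * a i)
          = algebraMap R (FractionRing R) (x : R) * (algebraMap R (FractionRing R) (a i) * b i) := by
        intro i; rw [_root_.map_mul, hφ]; ring
      rw [Finset.sum_congr rfl fun i _ => this i, ← Finset.mul_sum, hab, mul_one]
    exact Module.Flat.of_retract ψ π hretract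

private theorem aux_flat_of_torsionFree {R : Type*} [CommRing R] [IsDomain R] [IsDedekindDomain R]
    (M : Type*) [AddCommGroup M] [Module R M] [NoZeroSMulDivisors R M] : Module.Flat R M := by
  rw [Module.Flat.iff_lTensor_injective']
  intro I
  haveI : Module.Flat R I := aux_ideal_flat I
  haveI h2 : Module.Flat R (FractionRing R) := Localization.flat (R := R) (S := R) R⁰
  haveI h1 : Module.Flat (FractionRing R) (LocalizedModule R⁰ M) := inferInstance
  haveI h3 : Module.Flat R (LocalizedModule R⁰ M) :=
    Module.Flat.trans R (FractionRing R) (LocalizedModule R⁰ M)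
  set j := LocalizedModule.mkLinearMap R⁰ M with hj_def
  have hj : Function.Injective j := by
    rw [← LinearMap.ker_eq_bot, eq_bot_iff]
    intro m hm
    obtain ⟨r, hr, hrm⟩ := LocalizedModule.mem_ker_mkLinearMap_iff.mp hm
    have hr0 : r ≠ 0 := mem_nonZeroDivisors_iff_ne_zero.mp hr
    simpa using (smul_eq_zero.mp hrm).resolve_left hr0
  have h1' : Function.Injective (LinearMap.rTensor (↥I) j) :=
    Module.Flat.rTensor_preserves_injective_linearMap j hj
  have h2' : Function.Injective (LinearMap.lTensor (LocalizedModule R⁰ M) I.subtype) :=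
    Module.Flat.lTensor_preserves_injective_linearMap I.subtype I.injective_subtype
  have hcomm : (LinearMap.lTensor (LocalizedModule R⁰ M) I.subtype).comp
        (LinearMap.rTensor (↥I) j)
      = (LinearMap.rTensor R j).comp (LinearMap.lTensor M I.subtype) := by
    rw [LinearMap.lTensor_comp_rTensor, LinearMap.rTensor_comp_lTensor]
  intro x y hxy
  apply h1'; apply h2'
  have := congrArg (LinearMap.rTensor R j) hxy
  rw [← LinearMap.comp_apply, ← LinearMap.comp_apply, ← hcomm, LinearMap.comp_apply,
    LinearMap.comp_apply] at this
  exact this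

section RatAux

variable (R H : Type*) [CommRing R] [Ring H] [HopfAlgebra R H]

variable (R H : Type*) [CommRing R] [Ring H] [HopfAlgebra R H]

private theorem ratEndo_add (f g : H →ₗ[R] R) :
    ratEndo R H (f + g) = ratEndo R H f + ratEndo R H g := by
  simp [ratEndo, LinearMap.lTensor_add, LinearMap.comp_add, LinearMap.add_comp]

private theorem ratEndo_smul (c : R) (f : H →ₗ[R] R) :
    ratEndo R H (c • f) = c • ratEndo R H f := by
  simp [ratEndo, LinearMap.lTensor_smul, LinearMap.comp_smul, LinearMap.smul_comp]

private theorem ratEndo_zero : ratEndo R H (0 : H →ₗ[R] R) = 0 := by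
  simp [ratEndo, LinearMap.lTensor_zero]

end RatAux

private theorem aux_noZeroSMulDivisors_of_projective
    {R M : Type*} [CommRing R] [IsDomain R] [AddCommGroup M] [Module R M]
    [Module.Projective R M] : NoZeroSMulDivisors R M := by
  obtain ⟨s, hs⟩ := Module.projective_def.mp ‹Module.Projective R M›
  haveI : NoZeroSMulDivisors R (M →₀ R) :=
    ⟨fun h => Module.isTorsionFree_iff_smul_eq_zero.mp inferInstance _ _ h⟩
  exact Function.Injective.noZeroSMulDivisors s hs.injective (map_zero s) (map_smul s)

private theorem aux_noZeroSMulDivisors_linearMap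
    {R M : Type*} [CommRing R] [IsDomain R] [AddCommGroup M] [Module R M] :
    NoZeroSMulDivisors R (M →ₗ[R] R) := by
  refine Function.Injective.noZeroSMulDivisors (fun f => (f : M → R))
    (fun f g h => LinearMap.ext fun x => congrFun h x) rfl (fun c f => rfl)

/-- **Lemma.** Let `R` be a Dedekind domain and `H` an `R`-projective Hopf algebra.
The set `Rat(H*) = {f ∈ H* | Im(T_f) is a finitely generated R-submodule of H}`
is an `R`-submodule of `H*` which is flat over `R` and saturated in `H*`. -/
theorem rat_submodule_flat_saturated
    (R H : Type*) [CommRing R] [IsDomain R] [IsDedekindDomain R]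
    [Ring H] [HopfAlgebra R H] [Module.Projective R H] :
    ∃ N : Submodule R (H →ₗ[R] R),
      (N : Set (H →ₗ[R] R)) = {f | (LinearMap.range (ratEndo R H f)).FG} ∧
      Module.Flat R ↥N ∧
      ∀ (r : R) (f : H →ₗ[R] R), r ≠ 0 → r • f ∈ N → f ∈ N := by
  haveI : NoZeroSMulDivisors R H := aux_noZeroSMulDivisors_of_projective
  haveI : NoZeroSMulDivisors R (H →ₗ[R] R) := aux_noZeroSMulDivisors_linearMap
  have smul_range : ∀ (c : R) (T : H →ₗ[R] H),
      LinearMap.range (c • T) = Submodule.map (c • (LinearMap.id : H →ₗ[R] H))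
        (LinearMap.range T) := by
    intro c T
    have : c • T = (c • (LinearMap.id : H →ₗ[R] H)).comp T := by
      ext x; simp
    rw [this, LinearMap.range_comp]
  refine ⟨{
    carrier := {f | (LinearMap.range (ratEndo R H f)).FG}
    zero_mem' := by
      simp only [Set.mem_setOf_eq, ratEndo_zero, LinearMap.range_zero]
      exact Submodule.fg_bot
    add_mem' := by
      intro f g hf hg
      simp only [Set.mem_setOf_eq, ratEndo_add] at *
      have hsup : (LinearMap.range (ratEndo R H f) ⊔ LinearMap.range (ratEndo R H g)).FG :=
        Submodule.FG.sup hf hg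
      haveI := isNoetherian_of_fg_of_noetherian _ hsup
      refine isNoetherian_submodule.mp this _ ?_
      rintro x ⟨y, rfl⟩
      exact Submodule.add_mem_sup ⟨y, rfl⟩ ⟨y, rfl⟩
    smul_mem' := by
      intro c f hf
      simp only [Set.mem_setOf_eq, ratEndo_smul] at *
      rw [smul_range]
      exact Submodule.FG.map _ hf }, rfl, ?_, ?_⟩
  · haveI : ∀ S : Submodule R (H →ₗ[R] R), NoZeroSMulDivisors R S := fun S =>
      Function.Injective.noZeroSMulDivisors _ Subtype.val_injective rfl (fun _ _ => rfl)
    exact (fun S : Submodule R (H →ₗ[R] R) => (aux_flat_of_torsionFree S : Module.Flat R S)) _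
  · intro r f hr hrf
    simp only [Submodule.mem_mk, AddSubmonoid.mem_mk, AddSubsemigroup.mem_mk,
      Set.mem_setOf_eq, ratEndo_smul, smul_range] at hrf ⊢
    refine Submodule.fg_of_fg_map_injective (r • (LinearMap.id : H →ₗ[R] H)) ?_ hrf
    intro x y hxy
    simp only [LinearMap.smul_apply, LinearMap.id_apply] at hxy
    exact smul_right_injective H hr hxy
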